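/- Let C be a covering of a finite nonempty set U. Then SH(SH(X)) = SH(X) for all X ⊆ U if and only if the family {SH({x}) : x ∈ U} forms a partition of U, i.e., for all x, y ∈ U, either SH({x}) = SH({y}) or SH({x}) ∩ SH({y}) = ∅. -/
import Mathlib


open Set

/-- A covering of a finite nonempty universe `α`: a family of nonempty subsets whose union is everything. -/
def IsCovering {α : Type*} (C : Set (Set α)) : Prop :=
  (∀ K ∈ C, K.Nonempty) ∧ ⋃₀ C = Set.univ

/-- The second type of covering lower approximation. -/
def SL {α : Type*} (C : Set (Set α)) (X : Set α) : Set α :=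
  ⋃₀ {K | K ∈ C ∧ K ⊆ X}

/-- The second type of covering upper approximation. -/
def SH {α : Type*} (C : Set (Set α)) (X : Set α) : Set α :=
  ⋃₀ {K | K ∈ C ∧ (K ∩ X).Nonempty}

/-- The minimal description of a point. -/
def Md {α : Type*} (C : Set (Set α)) (x : α) : Set (Set α) :=
  {K | K ∈ C ∧ x ∈ K ∧ ∀ S ∈ C, x ∈ S → S ⊆ K → S = K}

/-- A covering is unary if every point has exactly one element in its minimal description. -/
def Unary {α : Type*} (C : Set (Set α)) : Prop :=
  ∀ x : α, ∃! K, K ∈ Md C x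

/-- The neighborhood of a point. -/
def Nbhd {α : Type*} (C : Set (Set α)) (x : α) : Set α :=
  ⋂₀ {K | K ∈ C ∧ x ∈ K}

/-- The indiscernible neighborhood of a point. -/
def IndNbhd {α : Type*} (C : Set (Set α)) (x : α) : Set α :=
  ⋃₀ {K | K ∈ C ∧ x ∈ K}

/-- A member of the covering is reducible if it is a union of other members. -/
def Reducible {α : Type*} (C : Set (Set α)) (K : Set α) : Prop :=
  ∃ D ⊆ C \ {K}, K = ⋃₀ D

/-- The reduct of a covering: its irreducible members. -/
def reduct {α : Type*} (C : Set (Set α)) : Set (Set α) :=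
  {K | K ∈ C ∧ ¬ Reducible C K}

/-- The closure operator induced by the fixed point family of `SL`. -/
def clC {α : Type*} (C : Set (Set α)) (X : Set α) : Set α :=
  ⋂₀ {S | SL C S = S ∧ X ⊆ S}

theorem stmt_7 {α : Type*} [Fintype α] [Nonempty α] (C : Set (Set α))
    (hC : IsCovering C) :
    (∀ X : Set α, SH C (SH C X) = SH C X) ↔
    (∀ x y : α, SH C {x} = SH C {y} ∨ SH C {x} ∩ SH C {y} = ∅) := by

  obtain ⟨-, hcov⟩ := hC
  have hself : ∀ x : α, x ∈ SH C {x} := by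
    intro x
    have hx : x ∈ ⋃₀ C := by rw [hcov]; exact mem_univ x
    obtain ⟨K, hK, hxK⟩ := hx
    exact ⟨K, ⟨hK, ⟨x, hxK, rfl⟩⟩, hxK⟩
  have hmono : ∀ X Y : Set α, X ⊆ Y → SH C X ⊆ SH C Y := by
    rintro X Y h a ⟨K, ⟨hK, y, hyK, hyX⟩, haK⟩
    exact ⟨K, ⟨hK, y, hyK, h hyX⟩, haK⟩
  have hmem : ∀ (X : Set α) (a : α), a ∈ SH C X ↔ ∃ x ∈ X, a ∈ SH C {x} := by
    intro X a
    constructor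
    · rintro ⟨K, ⟨hK, y, hyK, hyX⟩, haK⟩
      exact ⟨y, hyX, K, ⟨hK, y, hyK, rfl⟩, haK⟩
    · rintro ⟨x, hxX, K, ⟨hK, y, hyK, hy⟩, haK⟩
      rw [mem_singleton_iff] at hy; subst hy
      exact ⟨K, ⟨hK, y, hyK, hxX⟩, haK⟩
  have hsymm : ∀ a b : α, b ∈ SH C {a} → a ∈ SH C {b} := by
    rintro a b ⟨K, ⟨hK, y, hyK, hy⟩, hbK⟩
    rw [mem_singleton_iff] at hy; subst hy
    exact ⟨K, ⟨hK, b, hbK, rfl⟩, hyK⟩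
  constructor
  · intro hid x y
    by_cases hd : (SH C {x} ∩ SH C {y}) = ∅
    · exact Or.inr hd
    left
    obtain ⟨z, hzx, hzy⟩ := nonempty_iff_ne_empty.2 hd
    have key : ∀ a b : α, b ∈ SH C {a} → SH C {b} = SH C {a} := by
      intro a b hb
      apply Subset.antisymm
      · have := hmono {b} (SH C {a}) (singleton_subset_iff.2 hb)
        rwa [hid {a}] at this
      · have ha := hsymm a b hb
        have := hmono {a} (SH C {b}) (singleton_subset_iff.2 ha)
        rwa [hid {b}] at this
    rw [← key x z hzx, key y z hzy]
  · intro hpart X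
    apply Subset.antisymm
    · intro a ha
      obtain ⟨z, hz, haz⟩ := (hmem (SH C X) a).1 ha
      obtain ⟨x, hxX, hzx⟩ := (hmem X z).1 hz
      have heq : SH C {z} = SH C {x} := by
        rcases hpart z x with h | h
        · exact h
        · exact absurd h (nonempty_iff_ne_empty.1 ⟨z, hself z, hzx⟩)
      rw [heq] at haz
      exact (hmem X a).2 ⟨x, hxX, haz⟩
    · apply hmono
      intro x hx
      exact (hmem X x).2 ⟨x, hx, hself x⟩
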